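/- Ordering property of optimal inexactness schedules. Consider the master problem under Assumption B. If δ* is an optimal solution of the master problem, then for every pair of indices k₁, k₂ ∈ {0,…,N−1}: b_{k₁}/a_{k₁} ≥ b_{k₂}/a_{k₂} implies δ*_{k₁} ≥ δ*_{k₂}. -/

import Mathlib

open Topology Filter


set_option maxHeartbeats 1000000 in
/-- Ordering property of optimal inexactness schedules. -/
theorem ordering_optimal_schedule
    (N : ℕ) (δbar m M : ℝ)
    (hδbar : 0 < δbar) (hm : 0 ≤ m) (hm1 : m < 1) (hM : 1 < M)
    (a b : Fin N → ℝ) (ha : ∀ k, 0 < a k) (hb : ∀ k, 0 < b k)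
    (h h' : ℝ → ℝ)
    (h_nonneg : ∀ σ ∈ Set.Icc (m * δbar) (M * δbar), 0 ≤ h σ)
    (h_deriv : ∀ σ ∈ Set.Icc (m * δbar) (M * δbar),
      HasDerivWithinAt h (h' σ) (Set.Icc (m * δbar) (M * δbar)) σ)
    (h_anti : StrictAntiOn h (Set.Icc (m * δbar) (M * δbar)))
    (h'_neg : ∀ σ ∈ Set.Ioo (m * δbar) (M * δbar), h' σ < 0)
    (h'_mono : StrictMonoOn h' (Set.Ioo (m * δbar) (M * δbar)))
    (δs : Fin N → ℝ)
    (hfeas : ∀ k, δs k ∈ Set.Icc (m * δbar) (M * δbar))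
    (hbudget : ∑ k, b k * h (δs k) = (∑ k, b k) * h δbar)
    (hopt : ∀ δ : Fin N → ℝ, (∀ k, δ k ∈ Set.Icc (m * δbar) (M * δbar)) →
      (∑ k, b k * h (δ k) = (∑ k, b k) * h δbar) →
      ∑ k, a k * δs k ≤ ∑ k, a k * δ k)
    (k₁ k₂ : Fin N)
    (hν : b k₂ / a k₂ ≤ b k₁ / a k₁) :
    δs k₂ ≤ δs k₁ := by
  by_contra hcon
  push_neg at hcon
  -- notation
  set I : Set ℝ := Set.Icc (m * δbar) (M * δbar) with hI
  set δ₁ := δs k₁ with hδ₁def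
  set δ₂ := δs k₂ with hδ₂def
  have hk : k₁ ≠ k₂ := by
    intro hEq
    have : δ₁ = δ₂ := by rw [hδ₁def, hδ₂def, hEq]
    exact hcon.ne this
  have hmem₁ : δ₁ ∈ I := hfeas k₁
  have hmem₂ : δ₂ ∈ I := hfeas k₂
  have hb₁ : (0:ℝ) < b k₁ := hb k₁
  have hb₂ : (0:ℝ) < b k₂ := hb k₂
  have ha₁ : (0:ℝ) < a k₁ := ha k₁
  have ha₂ : (0:ℝ) < a k₂ := ha k₂
  have hab : b k₂ * a k₁ ≤ b k₁ * a k₂ := by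
    rw [div_le_div_iff₀ ha₂ ha₁] at hν; linarith
  have hcont : ContinuousOn h I := fun x hx => (h_deriv x hx).continuousWithinAt
  have hD : h δ₂ < h δ₁ := h_anti hmem₁ hmem₂ hcon
  set ρ := b k₂ / b k₁ with hρ
  have hρpos : 0 < ρ := div_pos hb₂ hb₁
  have h1ρ : (0:ℝ) < 1 + ρ := by linarith
  have hcpos : 0 < (h δ₁ - h δ₂) / (1 + ρ) := div_pos (by linarith) h1ρ
  -- choose t' ∈ (δ₁, δ₂) with h t' close to h δ₂
  obtain ⟨t', ht'mem, ht'close⟩ :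
      ∃ t' ∈ Set.Ioo δ₁ δ₂, h t' < h δ₂ + (h δ₁ - h δ₂) / (1 + ρ) := by
    have hne : (𝓝[Set.Ioo δ₁ δ₂] δ₂).NeBot := right_nhdsWithin_Ioo_neBot hcon
    have hsub : Set.Ioo δ₁ δ₂ ⊆ I := fun x hx =>
      ⟨le_trans hmem₁.1 hx.1.le, le_trans hx.2.le hmem₂.2⟩
    have hcw : ContinuousWithinAt h (Set.Ioo δ₁ δ₂) δ₂ := (hcont δ₂ hmem₂).mono hsub
    have hev : ∀ᶠ x in 𝓝[Set.Ioo δ₁ δ₂] δ₂, h x < h δ₂ + (h δ₁ - h δ₂) / (1 + ρ) :=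
      hcw (Iio_mem_nhds (by linarith))
    exact (hev.and self_mem_nhdsWithin).exists.imp fun x hx => ⟨hx.2, hx.1⟩
  have ht'I : t' ∈ I := ⟨le_trans hmem₁.1 ht'mem.1.le, le_trans ht'mem.2.le hmem₂.2⟩
  have hΔpos : 0 < h t' - h δ₂ := by
    have := h_anti ht'I hmem₂ ht'mem.2; linarith
  have hΔsmall : (1 + ρ) * (h t' - h δ₂) < h δ₁ - h δ₂ := by
    have h2 : h t' - h δ₂ < (h δ₁ - h δ₂) / (1 + ρ) := by linarith
    have h3 := (lt_div_iff₀ h1ρ).mp h2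
    nlinarith [h3]
  -- IVT to get s'
  set r := h δ₁ - ρ * (h t' - h δ₂) with hr
  have hsub12 : Set.Icc δ₁ δ₂ ⊆ I := fun x hx =>
    ⟨le_trans hmem₁.1 hx.1, le_trans hx.2 hmem₂.2⟩
  obtain ⟨s', hs'mem, hs'⟩ : ∃ s' ∈ Set.Icc δ₁ δ₂, h s' = r := by
    have hrmem : r ∈ Set.Icc (h δ₂) (h δ₁) := by
      constructor
      · nlinarith
      · nlinarith
    obtain ⟨s', hs'mem, hs'⟩ := intermediate_value_Icc' hcon.le (hcont.mono hsub12) hrmem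
    exact ⟨s', hs'mem, hs'⟩
  have hs'I : s' ∈ I := hsub12 hs'mem
  have hs'lt_t' : s' < t' := by
    by_contra hle
    push_neg at hle
    rcases eq_or_lt_of_le hle with hEq | hlt
    · rw [← hEq] at hs'
      nlinarith
    · have := h_anti ht'I hs'I hlt
      nlinarith
  have hδ₁lt_s' : δ₁ < s' := by
    rcases eq_or_lt_of_le hs'mem.1 with hEq | hlt
    · exfalso; rw [← hEq] at hs'; nlinarith
    · exact hlt
  -- exact budget exchange identity
  have hexch : b k₁ * (h δ₁ - h s') = b k₂ * (h t' - h δ₂) := by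
    rw [hs', hr, hρ]
    field_simp
    ring
  -- Mean value theorem on [δ₁, s']
  have hs'ltδ₂ : s' < δ₂ := lt_trans hs'lt_t' ht'mem.2
  have hIoosub : ∀ x ∈ Set.Ioo δ₁ δ₂, x ∈ Set.Ioo (m * δbar) (M * δbar) := fun x hx =>
    ⟨lt_of_le_of_lt hmem₁.1 hx.1, lt_of_lt_of_le hx.2 hmem₂.2⟩
  have hderivAt : ∀ x ∈ Set.Ioo δ₁ δ₂, HasDerivAt h (h' x) x := by
    intro x hx
    have hxI : x ∈ Set.Ioo (m * δbar) (M * δbar) := hIoosub x hx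
    exact (h_deriv x ⟨hxI.1.le, hxI.2.le⟩).hasDerivAt (Icc_mem_nhds hxI.1 hxI.2)
  obtain ⟨ξ₁, hξ₁mem, hξ₁⟩ :=
    exists_hasDerivAt_eq_slope h h' hδ₁lt_s'
      (hcont.mono (fun x hx => hsub12 ⟨hx.1, le_trans hx.2 hs'ltδ₂.le⟩))
      (fun x hx => hderivAt x ⟨hx.1, lt_trans hx.2 hs'ltδ₂⟩)
  obtain ⟨ξ₂, hξ₂mem, hξ₂⟩ :=
    exists_hasDerivAt_eq_slope h h' ht'mem.2
      (hcont.mono (fun x hx => hsub12 ⟨le_trans ht'mem.1.le hx.1, hx.2⟩))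
      (fun x hx => hderivAt x ⟨lt_of_lt_of_le ht'mem.1 hx.1.le, hx.2⟩)
  -- translate slopes
  have hp : 0 < s' - δ₁ := by linarith
  have hq : 0 < δ₂ - t' := by linarith [ht'mem.2]
  have hslope₁ : h δ₁ - h s' = -h' ξ₁ * (s' - δ₁) := by
    have := hξ₁
    field_simp at this
    linarith
  have hslope₂ : h t' - h δ₂ = -h' ξ₂ * (δ₂ - t') := by
    have := hξ₂
    field_simp at this
    linarith
  -- ξ₁ < ξ₂, both interior
  have hξ₁Ioo : ξ₁ ∈ Set.Ioo (m * δbar) (M * δbar) :=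
    hIoosub ξ₁ ⟨hξ₁mem.1, lt_trans hξ₁mem.2 hs'ltδ₂⟩
  have hξ₂Ioo : ξ₂ ∈ Set.Ioo (m * δbar) (M * δbar) :=
    hIoosub ξ₂ ⟨lt_trans hδ₁lt_s' (lt_of_lt_of_le hs'lt_t' hξ₂mem.1.le), hξ₂mem.2⟩
  have hξorder : ξ₁ < ξ₂ := lt_trans hξ₁mem.2 (lt_of_lt_of_le hs'lt_t' hξ₂mem.1.le)
  have hmono : h' ξ₁ < h' ξ₂ := h'_mono hξ₁Ioo hξ₂Ioo hξorder
  have hneg₂ : h' ξ₂ < 0 := h'_neg ξ₂ hξ₂Ioo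
  -- key cost inequality
  have hcost : a k₁ * (s' - δ₁) < a k₂ * (δ₂ - t') := by
    have hbal : b k₁ * (-h' ξ₁) * (s' - δ₁) = b k₂ * (-h' ξ₂) * (δ₂ - t') := by
      rw [hslope₁, hslope₂] at hexch; linarith [hexch]
    have hu : 0 < -h' ξ₁ := by linarith
    have hv : 0 < -h' ξ₂ := by linarith
    have hvu : -h' ξ₂ < -h' ξ₁ := by linarith
    have hbu : 0 < b k₁ * -h' ξ₁ := mul_pos hb₁ hu
    have step1 : a k₁ * (b k₂ * -h' ξ₂ * (δ₂ - t')) ≤ a k₂ * (b k₁ * -h' ξ₂ * (δ₂ - t')) := by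
      have h0 := mul_le_mul_of_nonneg_right hab (mul_pos hv hq).le
      calc a k₁ * (b k₂ * -h' ξ₂ * (δ₂ - t'))
          = b k₂ * a k₁ * (-h' ξ₂ * (δ₂ - t')) := by ring
        _ ≤ b k₁ * a k₂ * (-h' ξ₂ * (δ₂ - t')) := h0
        _ = a k₂ * (b k₁ * -h' ξ₂ * (δ₂ - t')) := by ring
    have step2 : a k₂ * (b k₁ * -h' ξ₂ * (δ₂ - t')) < a k₂ * (b k₁ * -h' ξ₁ * (δ₂ - t')) := by
      have h0 := mul_lt_mul_of_pos_left hvu (show (0:ℝ) < a k₂ * (b k₁ * (δ₂ - t')) from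
        mul_pos ha₂ (mul_pos hb₁ hq))
      calc a k₂ * (b k₁ * -h' ξ₂ * (δ₂ - t'))
          = a k₂ * (b k₁ * (δ₂ - t')) * -h' ξ₂ := by ring
        _ < a k₂ * (b k₁ * (δ₂ - t')) * -h' ξ₁ := h0
        _ = a k₂ * (b k₁ * -h' ξ₁ * (δ₂ - t')) := by ring
    have key : (b k₁ * -h' ξ₁) * (a k₁ * (s' - δ₁)) < (b k₁ * -h' ξ₁) * (a k₂ * (δ₂ - t')) := by
      have e1 : (b k₁ * -h' ξ₁) * (a k₁ * (s' - δ₁)) = a k₁ * (b k₁ * -h' ξ₁ * (s' - δ₁)) := by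
        ring
      have e2 : b k₁ * -h' ξ₁ * (s' - δ₁) = b k₂ * -h' ξ₂ * (δ₂ - t') := hbal
      rw [e1, e2]
      calc a k₁ * (b k₂ * -h' ξ₂ * (δ₂ - t')) ≤ a k₂ * (b k₁ * -h' ξ₂ * (δ₂ - t')) := step1
        _ < a k₂ * (b k₁ * -h' ξ₁ * (δ₂ - t')) := step2
        _ = (b k₁ * -h' ξ₁) * (a k₂ * (δ₂ - t')) := by ring
    exact lt_of_mul_lt_mul_left key hbu.le
  -- construct the perturbed schedule
  set δ' : Fin N → ℝ := Function.update (Function.update δs k₁ s') k₂ t' with hδ'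
  have hδ'k₁ : δ' k₁ = s' := by
    rw [hδ', Function.update_of_ne hk, Function.update_self]
  have hδ'k₂ : δ' k₂ = t' := by
    rw [hδ', Function.update_self]
  have hδ'other : ∀ k, k ≠ k₁ → k ≠ k₂ → δ' k = δs k := by
    intro k h1 h2
    rw [hδ', Function.update_of_ne h2, Function.update_of_ne h1]
  -- sum exchange lemma
  have keysum : ∀ F : Fin N → ℝ → ℝ,
      ∑ k, F k (δ' k) =
        ∑ k, F k (δs k) + (F k₁ s' - F k₁ δ₁) + (F k₂ t' - F k₂ δ₂) := by
    intro F
    have hzero : ∀ k ∈ Finset.univ, k ∉ ({k₁, k₂} : Finset (Fin N)) →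
        F k (δ' k) - F k (δs k) = 0 := by
      intro k _ hk'
      simp only [Finset.mem_insert, Finset.mem_singleton, not_or] at hk'
      rw [hδ'other k hk'.1 hk'.2, sub_self]
    have hsubset : ({k₁, k₂} : Finset (Fin N)) ⊆ Finset.univ := Finset.subset_univ _
    have h1 : ∑ k, (F k (δ' k) - F k (δs k)) =
        ∑ k ∈ ({k₁, k₂} : Finset (Fin N)), (F k (δ' k) - F k (δs k)) :=
      (Finset.sum_subset hsubset hzero).symm
    rw [Finset.sum_sub_distrib] at h1
    rw [Finset.sum_pair hk] at h1
    rw [hδ'k₁, hδ'k₂] at h1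
    rw [hδ₁def, hδ₂def]
    linarith
  -- feasibility of δ'
  have hfeas' : ∀ k, δ' k ∈ I := by
    intro k
    by_cases h1 : k = k₂
    · rw [h1, hδ'k₂]; exact ht'I
    · by_cases h2 : k = k₁
      · rw [h2, hδ'k₁]; exact hs'I
      · rw [hδ'other k h2 h1]; exact hfeas k
  -- budget for δ'
  have hbudget' : ∑ k, b k * h (δ' k) = (∑ k, b k) * h δbar := by
    have := keysum (fun k x => b k * h x)
    rw [this, ← hbudget]
    ring_nf
    nlinarith [hexch]
  -- optimality contradiction
  have hle := hopt δ' hfeas' hbudget'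
  have hsum := keysum (fun k x => a k * x)
  rw [hsum] at hle
  nlinarith [hcost]
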